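/- Let 0<p0,p≤∞ and 0<q≤∞. For each μ ∈ ℕ0, the norm of the identity between the building blocks satisfies ‖id_μ : (s^{t,Ω}_{p0,q}b)_μ → (s^{t,Ω}_{p,q}b)_μ‖ ≍ 2^{μ(1/p0 − 1/p)_+}, with equivalence constants independent of μ. -/

import Mathlib

open scoped ENNReal

/-- The wavelet index set `A_ν^Ω` of indices `m ∈ ℤ^d` whose wavelet meets the unit
cube: concretely `{m : -1 ≤ m_i ≤ 2^{ν_i}}`, of cardinality `≍ 2^{|ν|₁}`. -/
noncomputable def AOmega (d : ℕ) (ν : Fin d → ℕ) : Finset (Fin d → ℤ) :=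
  Finset.Icc (fun _ => (-1 : ℤ)) (fun i => (2 : ℤ) ^ (ν i))

/-- The quasi-norm of the block `(s^{t,Ω}_{p,q}b)_μ` (finite exponents). -/
noncomputable def bBlockNorm (d : ℕ) (t p q : ℝ) (μ : ℕ)
    (lam : (Fin d → ℕ) → (Fin d → ℤ) → ℂ) : ℝ≥0∞ :=
  (∑' ν : {ν : Fin d → ℕ // ∑ i, ν i = μ},
    ENNReal.ofReal ((2 : ℝ) ^ ((μ : ℝ) * (t - 1 / p) * q)) *
      (∑ m ∈ AOmega d ν.1, ENNReal.ofReal (‖lam ν.1 m‖ ^ p)) ^ (q / p)) ^ (1 / q)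

/-- The operator quasi-norm of the identity
`id_μ : (s^{t,Ω}_{p₀,q}b)_μ → (s^{t,Ω}_{p,q}b)_μ`. -/
noncomputable def blockIdNorm (d : ℕ) (t p₀ p q : ℝ) (μ : ℕ) : ℝ≥0∞ :=
  sInf {C : ℝ≥0∞ | ∀ lam, bBlockNorm d t p q μ lam ≤ C * bBlockNorm d t p₀ q μ lam}

lemma AOmega_card (d : ℕ) (ν : Fin d → ℕ) :
    (AOmega d ν).card = ∏ i, (2 ^ ν i + 2) := by
  rw [AOmega, Pi.card_Icc]
  refine Finset.prod_congr rfl fun i _ => ?_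
  rw [Int.card_Icc]
  have h : (2:ℤ) ^ ν i + 1 - (-1) = ((2 ^ ν i + 2 : ℕ) : ℤ) := by push_cast; ring
  rw [h, Int.toNat_natCast]

lemma two_pow_le_AOmega_card (d : ℕ) (ν : Fin d → ℕ) :
    2 ^ (∑ i, ν i) ≤ (AOmega d ν).card := by
  rw [AOmega_card, ← Finset.prod_pow_eq_pow_sum]
  exact Finset.prod_le_prod' fun i _ => Nat.le_add_right _ 2

lemma AOmega_card_le (d : ℕ) (ν : Fin d → ℕ) :
    (AOmega d ν).card ≤ 3 ^ d * 2 ^ (∑ i, ν i) := by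
  rw [AOmega_card]
  calc ∏ i, (2 ^ ν i + 2) ≤ ∏ i : Fin d, 3 * 2 ^ ν i := by
        refine Finset.prod_le_prod' fun i _ => ?_
        have h1 : 1 ≤ 2 ^ ν i := Nat.one_le_two_pow
        omega
    _ = 3 ^ d * 2 ^ (∑ i, ν i) := by
        rw [Finset.prod_mul_distrib, Finset.prod_const, Finset.prod_pow_eq_pow_sum,
          Finset.card_univ, Fintype.card_fin]

lemma sum_rpow_le_rpow_sum {ι : Type*} (s : Finset ι) (a : ι → ℝ≥0∞)
    (ha : ∀ i ∈ s, a i ≠ ∞) {p₀ p : ℝ} (h0 : 0 < p₀) (hle : p₀ ≤ p) :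
    ∑ i ∈ s, a i ^ p ≤ (∑ i ∈ s, a i ^ p₀) ^ (p / p₀) := by
  set S := ∑ i ∈ s, a i ^ p₀ with hS
  have hp : 0 < p := lt_of_lt_of_le h0 hle
  have hStop : S ≠ ∞ := by
    rw [hS]
    exact (ENNReal.sum_lt_top.2 fun i hi =>
      ENNReal.rpow_lt_top_of_nonneg h0.le (ha i hi)).ne
  rcases eq_or_ne S 0 with hS0 | hS0
  · have hz : ∀ i ∈ s, a i = 0 := by
      intro i hi
      rw [hS] at hS0
      have h1 := (Finset.sum_eq_zero_iff).1 hS0 i hi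
      simpa [ENNReal.rpow_eq_zero_iff, h0, h0.not_gt, not_lt.2 h0.le] using h1
    have hzz : ∑ i ∈ s, a i ^ p = 0 := Finset.sum_eq_zero fun i hi => by
      rw [hz i hi, ENNReal.zero_rpow_of_pos hp]
    simp [hzz]
  · have key : ∀ i ∈ s, a i ^ p ≤ a i ^ p₀ * S ^ ((p - p₀) / p₀) := by
      intro i hi
      rcases eq_or_ne (a i) 0 with h | h
      · rw [h, ENNReal.zero_rpow_of_pos hp, ENNReal.zero_rpow_of_pos h0, zero_mul]
      · have hai : a i ≤ S ^ (1 / p₀) := by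
          have h1 : a i ^ p₀ ≤ S := hS ▸ Finset.single_le_sum
            (f := fun j => a j ^ p₀) (fun j _ => zero_le) hi
          have h2 := ENNReal.rpow_le_rpow h1 (by positivity : (0:ℝ) ≤ 1 / p₀)
          rwa [← ENNReal.rpow_mul, mul_one_div, div_self h0.ne', ENNReal.rpow_one] at h2
        calc a i ^ p = a i ^ p₀ * a i ^ (p - p₀) := by
              rw [← ENNReal.rpow_add _ _ h (ha i hi)]; ring_nf
          _ ≤ a i ^ p₀ * (S ^ (1/p₀)) ^ (p - p₀) :=
              mul_le_mul_right (ENNReal.rpow_le_rpow hai (by linarith)) _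
          _ = a i ^ p₀ * S ^ ((p - p₀)/p₀) := by
              rw [← ENNReal.rpow_mul]; ring_nf
    calc ∑ i ∈ s, a i ^ p ≤ ∑ i ∈ s, a i ^ p₀ * S ^ ((p-p₀)/p₀) := Finset.sum_le_sum key
      _ = S * S ^ ((p-p₀)/p₀) := by rw [← Finset.sum_mul]
      _ = S ^ (p / p₀) := by
          have h2 : S * S ^ ((p-p₀)/p₀) = S ^ (1 + (p-p₀)/p₀) := by
            rw [ENNReal.rpow_add _ _ hS0 hStop, ENNReal.rpow_one]
          rw [h2]; congr 1; field_simp; ring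

lemma sum_rpow_le_card_mul_rpow_sum {ι : Type*} (s : Finset ι) (a : ι → ℝ≥0∞)
    {p₀ p : ℝ} (hp : 0 < p) (hle : p ≤ p₀) :
    ∑ i ∈ s, a i ^ p ≤ (s.card : ℝ≥0∞) ^ (1 - p / p₀) * (∑ i ∈ s, a i ^ p₀) ^ (p / p₀) := by
  rcases s.eq_empty_or_nonempty with rfl | hs
  · simp
  have hp₀ : 0 < p₀ := lt_of_lt_of_le hp hle
  have hN0 : (s.card : ℝ≥0∞) ≠ 0 := by
    simpa using hs.card_ne_zero
  have hNtop : (s.card : ℝ≥0∞) ≠ ∞ := ENNReal.natCast_ne_top _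
  have hw : ∑ _i ∈ s, (s.card : ℝ≥0∞)⁻¹ = 1 := by
    rw [Finset.sum_const, nsmul_eq_mul, ENNReal.mul_inv_cancel hN0 hNtop]
  have H := ENNReal.rpow_arith_mean_le_arith_mean_rpow s (fun _ => (s.card : ℝ≥0∞)⁻¹)
      (fun i => a i ^ p) hw (p := p₀ / p) ((one_le_div hp).2 hle)
  simp only [← ENNReal.rpow_mul] at H
  have hpp : p * (p₀ / p) = p₀ := by field_simp
  rw [hpp, ← Finset.mul_sum, ← Finset.mul_sum] at H
  have H2 := ENNReal.rpow_le_rpow H (le_of_lt (div_pos hp hp₀))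
  rw [← ENNReal.rpow_mul] at H2
  have h1 : p₀ / p * (p / p₀) = 1 := by field_simp
  rw [h1, ENNReal.rpow_one] at H2
  have θnn : (0:ℝ) ≤ p / p₀ := by positivity
  calc ∑ i ∈ s, a i ^ p
      = (s.card : ℝ≥0∞) * ((s.card : ℝ≥0∞)⁻¹ * ∑ i ∈ s, a i ^ p) := by
        rw [← mul_assoc, ENNReal.mul_inv_cancel hN0 hNtop, one_mul]
    _ ≤ (s.card : ℝ≥0∞) * ((s.card : ℝ≥0∞)⁻¹ * ∑ i ∈ s, a i ^ p₀) ^ (p/p₀) :=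
        mul_le_mul_right H2 _
    _ = (s.card : ℝ≥0∞) ^ (1 - p / p₀) * (∑ i ∈ s, a i ^ p₀) ^ (p / p₀) := by
        rw [ENNReal.mul_rpow_of_nonneg _ _ θnn, ENNReal.inv_rpow, ← mul_assoc,
          ENNReal.rpow_sub _ _ hN0 hNtop, ENNReal.rpow_one,
          div_eq_mul_inv (↑s.card : ℝ≥0∞)]

lemma bBlockNorm_le_of_forall (d : ℕ) (t p₀ p q : ℝ) (hq : 0 < q) (μ : ℕ)
    (lam : (Fin d → ℕ) → (Fin d → ℤ) → ℂ) (K : ℝ≥0∞)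
    (h : ∀ ν : Fin d → ℕ, ∑ i, ν i = μ →
      ENNReal.ofReal ((2:ℝ) ^ ((μ:ℝ) * (t - 1/p) * q)) *
        (∑ m ∈ AOmega d ν, ENNReal.ofReal (‖lam ν m‖ ^ p)) ^ (q / p) ≤
      K ^ q * (ENNReal.ofReal ((2:ℝ) ^ ((μ:ℝ) * (t - 1/p₀) * q)) *
        (∑ m ∈ AOmega d ν, ENNReal.ofReal (‖lam ν m‖ ^ p₀)) ^ (q / p₀))) :
    bBlockNorm d t p q μ lam ≤ K * bBlockNorm d t p₀ q μ lam := by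
  unfold bBlockNorm
  have h1 := ENNReal.tsum_le_tsum (f := fun ν : {ν : Fin d → ℕ // ∑ i, ν i = μ} =>
      ENNReal.ofReal ((2:ℝ) ^ ((μ:ℝ) * (t - 1/p) * q)) *
        (∑ m ∈ AOmega d ν.1, ENNReal.ofReal (‖lam ν.1 m‖ ^ p)) ^ (q / p))
    (g := fun ν : {ν : Fin d → ℕ // ∑ i, ν i = μ} =>
      K ^ q * (ENNReal.ofReal ((2:ℝ) ^ ((μ:ℝ) * (t - 1/p₀) * q)) *
        (∑ m ∈ AOmega d ν.1, ENNReal.ofReal (‖lam ν.1 m‖ ^ p₀)) ^ (q / p₀)))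
    (fun ν => h ν.1 ν.2)
  have h2 := le_trans h1 (le_of_eq (ENNReal.tsum_mul_left))
  calc _ ≤ (K ^ q * ∑' ν : {ν : Fin d → ℕ // ∑ i, ν i = μ},
      ENNReal.ofReal ((2:ℝ) ^ ((μ:ℝ) * (t - 1/p₀) * q)) *
        (∑ m ∈ AOmega d ν.1, ENNReal.ofReal (‖lam ν.1 m‖ ^ p₀)) ^ (q / p₀)) ^ (1/q) :=
      ENNReal.rpow_le_rpow h2 (by positivity)
    _ = _ := by
      rw [ENNReal.mul_rpow_of_nonneg _ _ (by positivity), ← ENNReal.rpow_mul,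
        mul_one_div, div_self hq.ne', ENNReal.rpow_one]

lemma bBlockNorm_single (d : ℕ) (t p q : ℝ) (hp : 0 < p) (hq : 0 < q) (μ : ℕ)
    (ν₀ : Fin d → ℕ) (hν₀ : ∑ i, ν₀ i = μ)
    (lam : (Fin d → ℕ) → (Fin d → ℤ) → ℂ)
    (hlam : ∀ ν m, ν ≠ ν₀ → lam ν m = 0) :
    bBlockNorm d t p q μ lam =
      ENNReal.ofReal ((2:ℝ) ^ ((μ:ℝ) * (t - 1/p))) *
        (∑ m ∈ AOmega d ν₀, ENNReal.ofReal (‖lam ν₀ m‖ ^ p)) ^ (1/p) := by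
  unfold bBlockNorm
  rw [tsum_eq_single (⟨ν₀, hν₀⟩ : {ν : Fin d → ℕ // ∑ i, ν i = μ}) ?side]
  · rw [ENNReal.mul_rpow_of_nonneg _ _ (by positivity)]
    congr 1
    · rw [ENNReal.ofReal_rpow_of_pos (by positivity), ← Real.rpow_mul (by norm_num),
        mul_one_div, mul_div_cancel_right₀ _ hq.ne']
    · rw [← ENNReal.rpow_mul]
      congr 1
      field_simp
  case side =>
    intro b hb
    have hb' : b.1 ≠ ν₀ := fun h' => hb (Subtype.ext h')
    have hz : ∀ m ∈ AOmega d b.1, ENNReal.ofReal (‖lam b.1 m‖ ^ p) = 0 := fun m _ => by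
      rw [hlam b.1 m hb', norm_zero, Real.zero_rpow hp.ne', ENNReal.ofReal_zero]
    rw [Finset.sum_eq_zero hz, ENNReal.zero_rpow_of_pos (by positivity), mul_zero]

/-- `‖id_μ : (s^{t,Ω}_{p₀,q}b)_μ → (s^{t,Ω}_{p,q}b)_μ‖ ≍ 2^{μ(1/p₀ - 1/p)₊}`,
with equivalence constants independent of `μ`. -/
theorem blockIdNorm_asymp_p (d : ℕ) (hd : 1 ≤ d) (t p₀ p q : ℝ)
    (hp₀ : 0 < p₀) (hp : 0 < p) (hq : 0 < q) :
    ∃ c₁ c₂ : ℝ, 0 < c₁ ∧ 0 < c₂ ∧ ∀ μ : ℕ,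
      ENNReal.ofReal (c₁ * (2 : ℝ) ^ ((μ : ℝ) * max (1 / p₀ - 1 / p) 0)) ≤
        blockIdNorm d t p₀ p q μ ∧
      blockIdNorm d t p₀ p q μ ≤
        ENNReal.ofReal (c₂ * (2 : ℝ) ^ ((μ : ℝ) * max (1 / p₀ - 1 / p) 0)) := by
  have h2pos : ∀ x : ℝ, (0:ℝ) < 2 ^ x := fun x => Real.rpow_pos_of_pos two_pos x
  rcases le_or_gt p₀ p with hcase | hcase
  · -- case p₀ ≤ p
    have hmax : max (1/p₀ - 1/p) 0 = 1/p₀ - 1/p :=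
      max_eq_left (by have := one_div_le_one_div_of_le hp₀ hcase; linarith)
    refine ⟨1, 1, one_pos, one_pos, fun μ => ⟨?_, ?_⟩⟩
    · -- lower bound via a delta test sequence
      rw [blockIdNorm]
      refine le_sInf fun C hC => ?_
      set i₀ : Fin d := ⟨0, hd⟩ with hi₀def
      set ν₀ : Fin d → ℕ := fun i => if i = i₀ then μ else 0 with hν₀def
      have hν₀ : ∑ i, ν₀ i = μ := by
        rw [hν₀def]; simp [Finset.sum_ite_eq']
      set m₀ : Fin d → ℤ := fun _ => -1 with hm₀def
      have hm₀ : m₀ ∈ AOmega d ν₀ := by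
        rw [AOmega, Finset.mem_Icc]
        constructor
        · intro i; simp [hm₀def]
        · intro i
          have h2 : (0:ℤ) < 2 ^ ν₀ i := by positivity
          simp only [hm₀def]; linarith
      set lam : (Fin d → ℕ) → (Fin d → ℤ) → ℂ :=
        fun ν m => if ν = ν₀ ∧ m = m₀ then 1 else 0 with hlamdef
      have hsum : ∀ r : ℝ, 0 < r →
          ∑ m ∈ AOmega d ν₀, ENNReal.ofReal (‖lam ν₀ m‖ ^ r) = 1 := by
        intro r hr
        rw [Finset.sum_eq_single_of_mem m₀ hm₀]
        · simp [hlamdef]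
        · intro b _ hb
          simp [hlamdef, hb, Real.zero_rpow hr.ne']
      have hlam0 : ∀ ν m, ν ≠ ν₀ → lam ν m = 0 := fun ν m hν => by
        simp [hlamdef, hν]
      have hN : ∀ r : ℝ, 0 < r → bBlockNorm d t r q μ lam
          = ENNReal.ofReal ((2:ℝ) ^ ((μ:ℝ) * (t - 1/r))) := by
        intro r hr
        rw [bBlockNorm_single d t r q hr hq μ ν₀ hν₀ lam hlam0,
          hsum r hr, ENNReal.one_rpow, mul_one]
      have key := hC lam
      rw [hN p hp, hN p₀ hp₀] at key
      rw [hmax, one_mul]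
      rw [← ENNReal.mul_le_mul_iff_left (c := ENNReal.ofReal ((2:ℝ)^((μ:ℝ)*(t-1/p₀))))
        (ENNReal.ofReal_pos.2 (h2pos _)).ne' ENNReal.ofReal_ne_top]
      refine le_trans (le_of_eq ?_) key
      rw [← ENNReal.ofReal_mul (by positivity), ← Real.rpow_add two_pos]
      congr 2
      ring
    · -- upper bound
      have hKle : ∀ lam, bBlockNorm d t p q μ lam ≤
          ENNReal.ofReal ((2:ℝ) ^ ((μ:ℝ) * (1/p₀ - 1/p))) * bBlockNorm d t p₀ q μ lam := by
        intro lam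
        refine bBlockNorm_le_of_forall d t p₀ p q hq μ lam _ (fun ν hν => ?_)
        have hKq : (ENNReal.ofReal ((2:ℝ) ^ ((μ:ℝ) * (1/p₀ - 1/p)))) ^ q
            = ENNReal.ofReal ((2:ℝ) ^ ((μ:ℝ) * (1/p₀ - 1/p) * q)) := by
          rw [ENNReal.ofReal_rpow_of_pos (h2pos _), ← Real.rpow_mul (by norm_num)]
        have hw : (2:ℝ) ^ ((μ:ℝ) * (t - 1/p) * q)
            = (2:ℝ) ^ ((μ:ℝ) * (1/p₀ - 1/p) * q) * (2:ℝ) ^ ((μ:ℝ) * (t - 1/p₀) * q) := by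
          rw [← Real.rpow_add two_pos]; congr 1; ring
        have hS : (∑ m ∈ AOmega d ν, ENNReal.ofReal (‖lam ν m‖ ^ p)) ^ (q/p)
            ≤ (∑ m ∈ AOmega d ν, ENNReal.ofReal (‖lam ν m‖ ^ p₀)) ^ (q/p₀) := by
          have base : (∑ m ∈ AOmega d ν, ENNReal.ofReal (‖lam ν m‖ ^ p))
              ≤ (∑ m ∈ AOmega d ν, ENNReal.ofReal (‖lam ν m‖ ^ p₀)) ^ (p/p₀) := by
            simp_rw [← ENNReal.ofReal_rpow_of_nonneg (norm_nonneg _) hp.le,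
              ← ENNReal.ofReal_rpow_of_nonneg (norm_nonneg _) hp₀.le]
            exact sum_rpow_le_rpow_sum _ _ (fun i _ => ENNReal.ofReal_ne_top) hp₀ hcase
          calc (∑ m ∈ AOmega d ν, ENNReal.ofReal (‖lam ν m‖ ^ p)) ^ (q/p)
              ≤ ((∑ m ∈ AOmega d ν, ENNReal.ofReal (‖lam ν m‖ ^ p₀)) ^ (p/p₀)) ^ (q/p) :=
                ENNReal.rpow_le_rpow base (by positivity)
            _ = _ := by
                rw [← ENNReal.rpow_mul]; congr 1; field_simp
        calc ENNReal.ofReal ((2:ℝ) ^ ((μ:ℝ) * (t - 1/p) * q)) *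
              (∑ m ∈ AOmega d ν, ENNReal.ofReal (‖lam ν m‖ ^ p)) ^ (q/p)
            ≤ ENNReal.ofReal ((2:ℝ) ^ ((μ:ℝ) * (t - 1/p) * q)) *
              (∑ m ∈ AOmega d ν, ENNReal.ofReal (‖lam ν m‖ ^ p₀)) ^ (q/p₀) :=
              mul_le_mul_right hS _
          _ = _ := by rw [hKq, hw, ENNReal.ofReal_mul (by positivity), mul_assoc]
      calc blockIdNorm d t p₀ p q μ
          ≤ ENNReal.ofReal ((2:ℝ) ^ ((μ:ℝ) * (1/p₀ - 1/p))) := sInf_le hKle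
        _ = _ := by rw [hmax, one_mul]
  · -- case p < p₀
    have hmax : max (1/p₀ - 1/p) 0 = 0 := by
      refine max_eq_right ?_
      have := one_div_le_one_div_of_le hp hcase.le
      linarith
    have hδ : (0:ℝ) < 1/p - 1/p₀ := by
      have := one_div_lt_one_div_of_lt hp hcase
      linarith
    refine ⟨1, (3:ℝ) ^ ((d:ℝ) * (1/p - 1/p₀)), one_pos,
      Real.rpow_pos_of_pos (by norm_num) _, fun μ => ⟨?_, ?_⟩⟩
    · -- lower bound via a constant test sequence on one block
      rw [blockIdNorm]
      refine le_sInf fun C hC => ?_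
      set i₀ : Fin d := ⟨0, hd⟩ with hi₀def
      set ν₀ : Fin d → ℕ := fun i => if i = i₀ then μ else 0 with hν₀def
      have hν₀ : ∑ i, ν₀ i = μ := by
        rw [hν₀def]; simp [Finset.sum_ite_eq']
      set lam : (Fin d → ℕ) → (Fin d → ℤ) → ℂ :=
        fun ν _ => if ν = ν₀ then 1 else 0 with hlamdef
      have hlam0 : ∀ ν m, ν ≠ ν₀ → lam ν m = 0 := fun ν m hν => by
        simp [hlamdef, hν]
      set N : ℕ := (AOmega d ν₀).card with hNdef
      have hNlb : 2 ^ μ ≤ N := hν₀ ▸ two_pow_le_AOmega_card d ν₀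
      have hN0 : (N : ℝ≥0∞) ≠ 0 := by
        have : 0 < N := lt_of_lt_of_le (Nat.two_pow_pos μ) hNlb
        exact_mod_cast this.ne'
      have hNtop : (N : ℝ≥0∞) ≠ ∞ := ENNReal.natCast_ne_top _
      have hsum : ∀ r : ℝ, 0 < r →
          ∑ m ∈ AOmega d ν₀, ENNReal.ofReal (‖lam ν₀ m‖ ^ r) = (N : ℝ≥0∞) := by
        intro r hr
        have hone : ∀ m ∈ AOmega d ν₀, ENNReal.ofReal (‖lam ν₀ m‖ ^ r) = 1 := fun m _ => by
          simp [hlamdef]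
        rw [Finset.sum_congr rfl hone, Finset.sum_const, nsmul_eq_mul, mul_one, hNdef]
      have hN : ∀ r : ℝ, 0 < r → bBlockNorm d t r q μ lam
          = ENNReal.ofReal ((2:ℝ) ^ ((μ:ℝ) * (t - 1/r))) * (N : ℝ≥0∞) ^ (1/r) := by
        intro r hr
        rw [bBlockNorm_single d t r q hr hq μ ν₀ hν₀ lam hlam0, hsum r hr]
      have key := hC lam
      rw [hN p hp, hN p₀ hp₀] at key
      -- the p₀-quasi-norm of the test is dominated by the p-quasi-norm
      have e3 : ENNReal.ofReal ((2:ℝ) ^ ((μ:ℝ) * (1/p - 1/p₀)))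
          ≤ (N : ℝ≥0∞) ^ (1/p - 1/p₀) := by
        have hcast : ((2^μ : ℕ) : ℝ≥0∞) = ENNReal.ofReal ((2:ℝ) ^ (μ:ℕ)) := by
          rw [← ENNReal.ofReal_natCast]; norm_num
        have h1 : ENNReal.ofReal ((2:ℝ) ^ ((μ:ℝ) * (1/p - 1/p₀)))
            = ((2^μ : ℕ) : ℝ≥0∞) ^ (1/p - 1/p₀) := by
          rw [hcast, ENNReal.ofReal_rpow_of_pos (by positivity),
            ← Real.rpow_natCast 2 μ, ← Real.rpow_mul (by norm_num)]
        rw [h1]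
        exact ENNReal.rpow_le_rpow (by exact_mod_cast hNlb) hδ.le
      have claim : ENNReal.ofReal ((2:ℝ) ^ ((μ:ℝ) * (t - 1/p₀))) * (N : ℝ≥0∞) ^ (1/p₀)
          ≤ ENNReal.ofReal ((2:ℝ) ^ ((μ:ℝ) * (t - 1/p))) * (N : ℝ≥0∞) ^ (1/p) := by
        have e2 : ENNReal.ofReal ((2:ℝ) ^ ((μ:ℝ) * (t - 1/p₀)))
            = ENNReal.ofReal ((2:ℝ) ^ ((μ:ℝ) * (t - 1/p))) *
              ENNReal.ofReal ((2:ℝ) ^ ((μ:ℝ) * (1/p - 1/p₀))) := by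
          have hexp : (μ:ℝ) * (t - 1/p₀) = (μ:ℝ) * (t - 1/p) + (μ:ℝ) * (1/p - 1/p₀) := by
            ring
          rw [hexp, Real.rpow_add two_pos, ENNReal.ofReal_mul (by positivity)]
        have e1 : (N : ℝ≥0∞) ^ (1/p)
            = (N : ℝ≥0∞) ^ (1/p - 1/p₀) * (N : ℝ≥0∞) ^ (1/p₀) := by
          rw [← ENNReal.rpow_add _ _ hN0 hNtop]; congr 1; ring
        calc ENNReal.ofReal ((2:ℝ) ^ ((μ:ℝ) * (t - 1/p₀))) * (N : ℝ≥0∞) ^ (1/p₀)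
            = ENNReal.ofReal ((2:ℝ) ^ ((μ:ℝ) * (t - 1/p))) *
              (ENNReal.ofReal ((2:ℝ) ^ ((μ:ℝ) * (1/p - 1/p₀))) * (N : ℝ≥0∞) ^ (1/p₀)) := by
              rw [e2, mul_assoc]
          _ ≤ ENNReal.ofReal ((2:ℝ) ^ ((μ:ℝ) * (t - 1/p))) *
              ((N : ℝ≥0∞) ^ (1/p - 1/p₀) * (N : ℝ≥0∞) ^ (1/p₀)) :=
              mul_le_mul_right (mul_le_mul_left e3 _) _
          _ = _ := by rw [← e1]
      have hX0 : ENNReal.ofReal ((2:ℝ) ^ ((μ:ℝ) * (t - 1/p₀))) * (N : ℝ≥0∞) ^ (1/p₀) ≠ 0 := by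
        apply mul_ne_zero (ENNReal.ofReal_pos.2 (h2pos _)).ne'
        simp [ENNReal.rpow_eq_zero_iff, hN0, hNtop]
      have hXtop : ENNReal.ofReal ((2:ℝ) ^ ((μ:ℝ) * (t - 1/p₀))) * (N : ℝ≥0∞) ^ (1/p₀) ≠ ∞ := by
        apply ENNReal.mul_ne_top ENNReal.ofReal_ne_top
        simp [ENNReal.rpow_eq_top_iff, hN0, hNtop]
      have hone : (1 : ℝ≥0∞) ≤ C := by
        rw [← ENNReal.mul_le_mul_iff_left hX0 hXtop, one_mul]
        exact claim.trans key
      rw [hmax, mul_zero, Real.rpow_zero, mul_one, ENNReal.ofReal_one]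
      exact hone
    · -- upper bound via Jensen
      have hKle : ∀ lam, bBlockNorm d t p q μ lam ≤
          ENNReal.ofReal ((3:ℝ) ^ ((d:ℝ) * (1/p - 1/p₀))) * bBlockNorm d t p₀ q μ lam := by
        intro lam
        refine bBlockNorm_le_of_forall d t p₀ p q hq μ lam _ (fun ν hν => ?_)
        set α : ℝ := (1/p - 1/p₀) * q with hαdef
        have hα : 0 < α := mul_pos hδ hq
        set N : ℕ := (AOmega d ν).card with hNdef
        have hNub : N ≤ 3 ^ d * 2 ^ μ := hν ▸ AOmega_card_le d ν
        have hKq : (ENNReal.ofReal ((3:ℝ) ^ ((d:ℝ) * (1/p - 1/p₀)))) ^ q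
            = ENNReal.ofReal ((3:ℝ) ^ ((d:ℝ) * α)) := by
          rw [ENNReal.ofReal_rpow_of_pos (Real.rpow_pos_of_pos (by norm_num) _),
            ← Real.rpow_mul (by norm_num)]
          congr 1
          rw [hαdef]; ring
        have hS : (∑ m ∈ AOmega d ν, ENNReal.ofReal (‖lam ν m‖ ^ p)) ^ (q/p)
            ≤ (N : ℝ≥0∞) ^ α *
              (∑ m ∈ AOmega d ν, ENNReal.ofReal (‖lam ν m‖ ^ p₀)) ^ (q/p₀) := by
          have base : (∑ m ∈ AOmega d ν, ENNReal.ofReal (‖lam ν m‖ ^ p))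
              ≤ (N : ℝ≥0∞) ^ (1 - p/p₀) *
                (∑ m ∈ AOmega d ν, ENNReal.ofReal (‖lam ν m‖ ^ p₀)) ^ (p/p₀) := by
            simp_rw [← ENNReal.ofReal_rpow_of_nonneg (norm_nonneg _) hp.le,
              ← ENNReal.ofReal_rpow_of_nonneg (norm_nonneg _) hp₀.le]
            exact sum_rpow_le_card_mul_rpow_sum _ _ hp hcase.le
          calc (∑ m ∈ AOmega d ν, ENNReal.ofReal (‖lam ν m‖ ^ p)) ^ (q/p)
              ≤ ((N : ℝ≥0∞) ^ (1 - p/p₀) *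
                (∑ m ∈ AOmega d ν, ENNReal.ofReal (‖lam ν m‖ ^ p₀)) ^ (p/p₀)) ^ (q/p) :=
                ENNReal.rpow_le_rpow base (by positivity)
            _ = _ := by
                have ea : (1 - p/p₀) * (q/p) = α := by
                  rw [hαdef]; field_simp
                have eb : p/p₀ * (q/p) = q/p₀ := by field_simp
                rw [ENNReal.mul_rpow_of_nonneg _ _ (by positivity),
                  ← ENNReal.rpow_mul, ← ENNReal.rpow_mul, ea, eb]
        have hNα : (N : ℝ≥0∞) ^ α ≤
            ENNReal.ofReal (((3:ℝ) ^ (d:ℝ) * (2:ℝ) ^ (μ:ℝ)) ^ α) := by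
          have hc : ((3 ^ d * 2 ^ μ : ℕ) : ℝ≥0∞)
              = ENNReal.ofReal ((3:ℝ) ^ (d:ℝ) * (2:ℝ) ^ (μ:ℝ)) := by
            rw [← ENNReal.ofReal_natCast]
            congr 1
            push_cast
            rw [Real.rpow_natCast, Real.rpow_natCast]
          calc (N : ℝ≥0∞) ^ α ≤ ((3 ^ d * 2 ^ μ : ℕ) : ℝ≥0∞) ^ α :=
              ENNReal.rpow_le_rpow (by exact_mod_cast hNub) hα.le
            _ = _ := by rw [hc, ENNReal.ofReal_rpow_of_pos (by positivity)]
        have hwkey : (2:ℝ) ^ ((μ:ℝ) * (t - 1/p) * q) * ((3:ℝ) ^ (d:ℝ) * (2:ℝ) ^ (μ:ℝ)) ^ α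
            = (3:ℝ) ^ ((d:ℝ) * α) * (2:ℝ) ^ ((μ:ℝ) * (t - 1/p₀) * q) := by
          rw [Real.mul_rpow (by positivity) (by positivity),
            ← Real.rpow_mul (by norm_num : (0:ℝ) ≤ 3),
            ← Real.rpow_mul (by norm_num : (0:ℝ) ≤ 2)]
          have hre : (2:ℝ) ^ ((μ:ℝ) * (t - 1/p) * q) *
              ((3:ℝ) ^ ((d:ℝ) * α) * (2:ℝ) ^ ((μ:ℝ) * α))
              = (3:ℝ) ^ ((d:ℝ) * α) *
                ((2:ℝ) ^ ((μ:ℝ) * (t - 1/p) * q) * (2:ℝ) ^ ((μ:ℝ) * α)) := by ring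
          rw [hre, ← Real.rpow_add two_pos]
          congr 2
          rw [hαdef]; ring
        calc ENNReal.ofReal ((2:ℝ) ^ ((μ:ℝ) * (t - 1/p) * q)) *
              (∑ m ∈ AOmega d ν, ENNReal.ofReal (‖lam ν m‖ ^ p)) ^ (q/p)
            ≤ ENNReal.ofReal ((2:ℝ) ^ ((μ:ℝ) * (t - 1/p) * q)) *
              ((N : ℝ≥0∞) ^ α *
                (∑ m ∈ AOmega d ν, ENNReal.ofReal (‖lam ν m‖ ^ p₀)) ^ (q/p₀)) :=
              mul_le_mul_right hS _
          _ ≤ ENNReal.ofReal ((2:ℝ) ^ ((μ:ℝ) * (t - 1/p) * q)) *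
              (ENNReal.ofReal (((3:ℝ) ^ (d:ℝ) * (2:ℝ) ^ (μ:ℝ)) ^ α) *
                (∑ m ∈ AOmega d ν, ENNReal.ofReal (‖lam ν m‖ ^ p₀)) ^ (q/p₀)) :=
              mul_le_mul_right (mul_le_mul_left hNα _) _
          _ = _ := by
              rw [hKq, ← mul_assoc, ← ENNReal.ofReal_mul (by positivity), hwkey,
                ENNReal.ofReal_mul (by positivity), mul_assoc]
      calc blockIdNorm d t p₀ p q μ
          ≤ ENNReal.ofReal ((3:ℝ) ^ ((d:ℝ) * (1/p - 1/p₀))) := sInf_le hKle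
        _ = _ := by rw [hmax, mul_zero, Real.rpow_zero, mul_one]
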